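/- Let A be a nonunital ring (or C*-algebra) and A⁺ its unitization. A right A-module E is finitely generated over A and projective over A⁺ if and only if E ≅ pAⁿ for some n and some idempotent p ∈ Mₙ(A). -/

import Mathlib

open MulOpposite

namespace Stmt0Aux

variable {R : Type*} [Semiring R] {n : ℕ}

/-- `mulVec` by a fixed matrix, as a right-linear map. -/
def mulVecOp (p : Matrix (Fin n) (Fin n) R) : (Fin n → R) →ₗ[Rᵐᵒᵖ] (Fin n → R) where
  toFun := p.mulVec
  map_add' x y := Matrix.mulVec_add p x y
  map_smul' c w := by
    ext i
    simp only [Matrix.mulVec, dotProduct, Pi.smul_apply,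
      MulOpposite.smul_eq_mul_unop, RingHom.id_apply, Finset.sum_mul, mul_assoc]

lemma eq_sum_single (w : Fin n → R) : w = ∑ j, MulOpposite.op (w j) • Pi.single j (1:R) := by
  funext i
  simp [Pi.single_apply, MulOpposite.smul_eq_mul_unop, Finset.sum_ite_eq]

lemma mulVecOp_single (p : Matrix (Fin n) (Fin n) R) (j : Fin n) :
    mulVecOp p (Pi.single j 1) = fun i => p i j := by
  funext i
  simp [mulVecOp, Matrix.mulVec, dotProduct, Pi.single_apply, mul_ite]

/-- entrywise `unop` as a linear equivalence. -/
def unopPi : (Fin n → Rᵐᵒᵖ) ≃ₗ[Rᵐᵒᵖ] (Fin n → R) where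
  toFun w i := (w i).unop
  invFun w i := op (w i)
  left_inv w := by ext i; simp
  right_inv w := by ext i; simp
  map_add' x y := by ext i; simp
  map_smul' c w := by
    ext i
    simp [MulOpposite.smul_eq_mul_unop, smul_eq_mul]

variable (A : Type*) [NonUnitalRing A]

omit [NonUnitalRing A] in
lemma exists_coe_of_fst_eq_zero {x : Unitization ℤ A} (h : x.fst = 0) :
    ∃ a : A, x = (a : Unitization ℤ A) :=
  ⟨x.snd, (Unitization.ext (by simp [h]) (by simp)).symm⟩

lemma fst_sum {ι : Type*} (s : Finset ι) (g : ι → Unitization ℤ A) :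
    (∑ i ∈ s, g i).fst = ∑ i ∈ s, (g i).fst :=
  map_sum (AddMonoidHom.mk' (fun x : Unitization ℤ A => x.fst) Unitization.fst_add) g s

lemma coe_sum {ι : Type*} (s : Finset ι) (g : ι → A) :
    ((∑ i ∈ s, g i : A) : Unitization ℤ A) = ∑ i ∈ s, ((g i : A) : Unitization ℤ A) :=
  map_sum (AddMonoidHom.mk' (fun a : A => (a : Unitization ℤ A)) (Unitization.inr_add ℤ)) g s

end Stmt0Aux

open Stmt0Aux

/-- Let `A` be a nonunital ring and `A⁺ = Unitization ℤ A` its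
unitization.  A right `A`-module `E` (formalized as a module over `(A⁺)ᵐᵒᵖ`, i.e. a
right `A⁺`-module) is finitely generated over `A` and projective over `A⁺` if and only
if `E ≅ pAⁿ` for some `n` and some idempotent `p ∈ Mₙ(A)`. -/
theorem stmt_0 (A : Type*) [NonUnitalRing A]
    (E : Type*) [AddCommGroup E] [Module (Unitization ℤ A)ᵐᵒᵖ E] :
    -- E is finitely generated as a right A-module, and projective over A⁺
    ((∃ s : Finset E, ∀ e : E, ∃ a : E → A,
        e = ∑ x ∈ s, (MulOpposite.op ((a x : Unitization ℤ A))) • x)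
      ∧ Module.Projective (Unitization ℤ A)ᵐᵒᵖ E)
    ↔
    -- E ≅ pAⁿ for some idempotent p ∈ Mₙ(A)
    ∃ (n : ℕ) (p : Matrix (Fin n) (Fin n) (Unitization ℤ A)),
      (∀ i j, ∃ a : A, p i j = (a : Unitization ℤ A)) ∧ p * p = p ∧
      ∃ f : LinearMap (R := (Unitization ℤ A)ᵐᵒᵖ) (RingHom.id _) E (Fin n → Unitization ℤ A),
        Function.Injective f ∧
        Set.range f
          = {w | ∃ v : Fin n → A, w = p.mulVec (fun j => ((v j : Unitization ℤ A)))} := by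
  set R := Unitization ℤ A with hR
  constructor
  · rintro ⟨⟨s, hs⟩, hproj⟩
    haveI : Module.Finite Rᵐᵒᵖ E := by
      refine ⟨⟨s, top_unique fun e _ => ?_⟩⟩
      obtain ⟨a, ha⟩ := hs e
      rw [ha]
      exact Submodule.sum_mem _ fun x hx =>
        Submodule.smul_mem _ _ (Submodule.subset_span hx)
    obtain ⟨m, G, F, -, -, hGF⟩ := Module.Finite.exists_comp_eq_id_of_projective Rᵐᵒᵖ E
    set u : LinearEquiv (R := Rᵐᵒᵖ) (RingHom.id _) (Fin m → Rᵐᵒᵖ) (Fin m → R) := unopPi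
    set f : LinearMap (R := Rᵐᵒᵖ) (RingHom.id _) E (Fin m → R) := u.toLinearMap ∘ₗ F with hf
    set g : LinearMap (R := Rᵐᵒᵖ) (RingHom.id _) (Fin m → R) E := G ∘ₗ u.symm.toLinearMap with hg
    have hgf : ∀ e, g (f e) = e := by
      intro e
      have := DFunLike.congr_fun hGF e
      simpa [hf, hg] using this
    have hinj : Function.Injective f := fun a b h => by
      rw [← hgf a, ← hgf b, h]
    set q : LinearMap (R := Rᵐᵒᵖ) (RingHom.id _) (Fin m → R) (Fin m → R) := f ∘ₗ g with hq
    have hqf : ∀ e, q (f e) = f e := fun e => by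
      simp only [hq, LinearMap.comp_apply, hgf]
    -- entries of f e lie in A
    have hfA : ∀ (e : E) (i : Fin m), (f e i).fst = 0 := by
      intro e i
      obtain ⟨a, ha⟩ := hs e
      rw [ha, map_sum]
      have h1 : (∑ x ∈ s, f (MulOpposite.op ((a x : R)) • x)) i
          = ∑ x ∈ s, (f x i) * (a x : R) := by
        simp [MulOpposite.smul_eq_mul_unop]
      rw [h1, fst_sum]
      refine Finset.sum_eq_zero fun x _ => ?_
      rw [Unitization.fst_mul, Unitization.fst_inr, mul_zero]
    set p : Matrix (Fin m) (Fin m) R := fun i j => q (Pi.single j 1) i with hp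
    have hsingle : ∀ j, mulVecOp p (Pi.single j 1) = q (Pi.single j 1) := by
      intro j
      rw [mulVecOp_single]
    have key : ∀ w, mulVecOp p w = q w := by
      intro w
      have hw := eq_sum_single w
      calc mulVecOp p w = mulVecOp p (∑ j, MulOpposite.op (w j) • Pi.single j 1) := by rw [← hw]
        _ = ∑ j, MulOpposite.op (w j) • mulVecOp p (Pi.single j 1) := by
            rw [map_sum]; simp only [map_smul]
        _ = ∑ j, MulOpposite.op (w j) • q (Pi.single j 1) := by
            exact Finset.sum_congr rfl fun j _ => by rw [hsingle]
        _ = q (∑ j, MulOpposite.op (w j) • Pi.single j 1) := by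
            rw [map_sum]; simp only [map_smul]
        _ = q w := by rw [← hw]
    refine ⟨m, p, ?_, ?_, f, hinj, ?_⟩
    · intro i j
      exact exists_coe_of_fst_eq_zero A (hfA (g (Pi.single j 1)) i)
    · -- p * p = p
      funext i j
      have h2 : (fun k => p k j) = q (Pi.single j 1) := rfl
      have h3 : (p * p) i j = p.mulVec (fun k => p k j) i := by
        simp [Matrix.mul_apply, Matrix.mulVec, dotProduct]
      rw [h3, h2]
      have h4 : p.mulVec (q (Pi.single j 1)) = mulVecOp p (q (Pi.single j 1)) := rfl
      rw [h4, key]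
      have h5 : q (q (Pi.single j 1)) = q (Pi.single j 1) := by
        simp only [hq, LinearMap.comp_apply, hgf]
      rw [h5]
    · ext w
      constructor
      · rintro ⟨e, rfl⟩
        refine ⟨fun j => (f e j).snd, ?_⟩
        have hco : (fun j => (((f e j).snd : A) : R)) = f e := by
          funext j
          obtain ⟨a, ha⟩ := exists_coe_of_fst_eq_zero A (hfA e j)
          rw [ha]; simp
        rw [hco]
        have : p.mulVec (f e) = mulVecOp p (f e) := rfl
        rw [this, key, hqf]
      · rintro ⟨v, rfl⟩
        refine ⟨g (fun j => ((v j : A) : R)), ?_⟩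
        have : p.mulVec (fun j => ((v j : A) : R))
            = mulVecOp p (fun j => ((v j : A) : R)) := rfl
        rw [this, key]
        rfl
  · rintro ⟨n, p, hpA, hp2, f, hinj, hrange⟩
    choose pa hpa using hpA
    -- columns of p are in range of f
    have hcol : ∀ j, ∃ e : E, f e = fun i => p i j := by
      intro j
      have : (fun i => p i j) ∈ Set.range f := by
        rw [hrange]
        refine ⟨fun k => pa k j, ?_⟩
        funext i
        have : p.mulVec (fun k => ((pa k j : A) : R)) i = (p * p) i j := by
          simp only [Matrix.mulVec, dotProduct, Matrix.mul_apply]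
          exact Finset.sum_congr rfl fun k _ => by rw [hpa k j]
        rw [this, hp2]
      exact this
    choose x hx using hcol
    have hppv : ∀ w : Fin n → R, p.mulVec (p.mulVec w) = p.mulVec w := by
      intro w
      have := Matrix.mulVec_mulVec w p p; rw [hp2] at this; exact this
    have hfmem : ∀ e : E, ∃ v : Fin n → A,
        f e = p.mulVec (fun j => ((v j : A) : R)) := by
      intro e
      have : f e ∈ Set.range f := Set.mem_range_self e
      rw [hrange] at this
      exact this
    constructor
    · -- finitely generated over A
      classical
      refine ⟨Finset.univ.image x, fun e => ?_⟩
      obtain ⟨v, hv⟩ := hfmem e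
      have he : e = ∑ j, MulOpposite.op ((v j : R)) • x j := by
        apply hinj
        rw [map_sum, hv]
        funext i
        simp only [Finset.sum_apply, map_smul, Pi.smul_apply,
          MulOpposite.smul_eq_mul_unop, unop_op, hx]
        simp [Matrix.mulVec, dotProduct]
      refine ⟨fun y => ∑ j ∈ Finset.univ.filter (fun j => x j = y), v j, ?_⟩
      rw [he]
      refine (Finset.sum_image' (fun j => MulOpposite.op ((v j : R)) • x j) ?_).symm
      intro c _
      calc MulOpposite.op (((∑ j ∈ Finset.univ.filter (fun j => x j = x c), v j : A) : R)) • x c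
          = (∑ j ∈ Finset.univ.filter (fun j => x j = x c), MulOpposite.op ((v j : R))) • x c := by
            rw [coe_sum, Finset.op_sum]
        _ = ∑ j ∈ Finset.univ.filter (fun j => x j = x c), MulOpposite.op ((v j : R)) • x c :=
            Finset.sum_smul
        _ = ∑ j ∈ Finset.univ.filter (fun j => x j = x c), MulOpposite.op ((v j : R)) • x j :=
            Finset.sum_congr rfl fun j hj => by rw [(Finset.mem_filter.mp hj).2]
    · -- projectivity
      haveI : Module.Projective Rᵐᵒᵖ (Fin n → R) :=
        Module.Projective.of_equiv (unopPi (R := R) (n := n))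
      have hmem : ∀ w : Fin n → R, mulVecOp p w ∈ LinearMap.range f := by
        intro w
        have h0 : ∀ i, (p.mulVec w i).fst = 0 := by
          intro i
          simp only [Matrix.mulVec, dotProduct]
          rw [fst_sum]
          refine Finset.sum_eq_zero fun k _ => ?_
          rw [hpa, Unitization.fst_mul, Unitization.fst_inr, zero_mul]
        have hco : (fun j => (((p.mulVec w j).snd : A) : R)) = p.mulVec w := by
          funext j
          obtain ⟨a, ha⟩ := exists_coe_of_fst_eq_zero A (h0 j)
          rw [ha]; simp
        rw [LinearMap.mem_range]
        have : p.mulVec w ∈ Set.range f := by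
          rw [hrange]
          exact ⟨fun j => (p.mulVec w j).snd, by rw [hco]; exact (hppv w).symm⟩
        exact this
      set F : LinearEquiv (R := Rᵐᵒᵖ) (RingHom.id _) E (LinearMap.range f) := LinearEquiv.ofInjective f hinj
      refine Module.Projective.of_split f
        (F.symm.toLinearMap ∘ₗ (mulVecOp p).codRestrict (LinearMap.range f) hmem) ?_
      ext e
      have hpe : mulVecOp p (f e) = f e := by
        obtain ⟨v, hv⟩ := hfmem e
        show p.mulVec (f e) = f e
        rw [hv]
        exact hppv _
      simp only [LinearMap.comp_apply, LinearEquiv.coe_coe, LinearMap.id_apply]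
      rw [LinearEquiv.symm_apply_eq]
      apply Subtype.ext
      rw [LinearMap.codRestrict_apply]
      show mulVecOp p (f e) = ↑(F e)
      rw [hpe]
      rfl
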